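/- Let 0 < 1/n ≪ ε, 1/K ≪ α ≤ 1 and let G₁,…,G_n be graphs on a common vertex set V = {1,…,n}, all K-partite with respect to a common balanced partition V₁,…,V_K, such that for every j ∈ {1,…,K−1} and every i ∈ {1,…,n}, every vertex of V_j has at least (1/2 + α)n/K neighbours in V_{j+1} in G_i and every vertex of V_{j+1} has at least (1/2 + α)n/K neighbours in V_j in G_i. Let s ≤ (1−ε)n/K and for each i ∈ {1,…,s} let χ_i : {1,…,K−1} → {1,…,n}. Then there exist pairwise vertex-disjoint paths P₁,…,P_s, each with K vertices and with one vertex in each part V₁,…,V_K in order, such that for every i and every j ∈ {1,…,K−1}, the j-th edge of P_i is an edge of G_{χ_i(j)}. -/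

import Mathlib

lemma exp_le_one_add_add_sq {a : ℝ} (h0 : 0 ≤ a) (h1 : a ≤ 1) :
    Real.exp a ≤ 1 + a + a ^ 2 := by
  have := Real.exp_bound' h0 h1 (n := 2) (by norm_num)
  simp [Finset.sum_range_succ, Nat.factorial] at this
  nlinarith [sq_nonneg a]

lemma avg_step_ineq {a q : ℝ} (ha0 : 0 ≤ a) (ha1 : a ≤ 1) (hq0 : 0 ≤ q) (hq1 : q ≤ 1) :
    q * Real.exp a + (1 - q) ≤ Real.exp (a * q + a ^ 2) := by
  have h1 : Real.exp a ≤ 1 + a + a ^ 2 := exp_le_one_add_add_sq ha0 ha1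
  have h2 : (1 : ℝ) + (a * q + a ^ 2) ≤ Real.exp (a * q + a ^ 2) := by
    have := Real.add_one_le_exp (a * q + a ^ 2); linarith
  nlinarith [sq_nonneg a]

lemma quartic_le_exp {x : ℝ} (hx : 0 ≤ x) : (x / 4) ^ 4 ≤ Real.exp x := by
  have h1 : 1 + x / 4 ≤ Real.exp (x / 4) := by
    have := Real.add_one_le_exp (x / 4); linarith
  have h2 : (x / 4) ^ 4 ≤ (1 + x / 4) ^ 4 := by
    apply pow_le_pow_left₀ (by positivity); linarith
  have h3 : (1 + x / 4) ^ 4 ≤ Real.exp (x / 4) ^ 4 := by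
    apply pow_le_pow_left₀ (by positivity) h1
  have h4 : Real.exp (x / 4) ^ 4 = Real.exp x := by
    rw [← Real.exp_nat_mul]; ring_nf
  linarith


lemma dirac_pm {V : Type*} [Fintype V] [DecidableEq V] (G : SimpleGraph V)
    (A B : Finset V) (hcard : A.card = B.card)
    (hA : ∀ v ∈ A, ∃ NB : Finset V, NB ⊆ B ∧ (∀ w ∈ NB, G.Adj v w) ∧
      (A.card : ℝ) < 2 * (NB.card : ℝ))
    (hB : ∀ w ∈ B, ∃ NA : Finset V, NA ⊆ A ∧ (∀ v ∈ NA, G.Adj w v) ∧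
      (B.card : ℝ) < 2 * (NA.card : ℝ)) :
    ∃ f : V → V, Set.InjOn f ↑A ∧ Finset.image f A = B ∧ (∀ v ∈ A, G.Adj v (f v)) := by
  classical
  set t : ↥A → Finset V := fun a => B.filter (fun w => G.Adj a.1 w) with ht
  have hall : ∀ S : Finset ↥A, S.card ≤ (S.biUnion t).card := by
    intro S
    rcases S.eq_empty_or_nonempty with rfl | ⟨a, ha⟩
    · simp
    by_cases hS : 2 * S.card ≤ A.card
    · have h1 : t a ⊆ S.biUnion t := Finset.subset_biUnion_of_mem t ha
      obtain ⟨NB, hNBsub, hNBadj, hNBcard⟩ := hA a.1 a.2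
      have hsub2 : NB ⊆ t a := by
        intro w hw
        rw [ht]
        simp only [Finset.mem_filter]
        exact ⟨hNBsub hw, hNBadj w hw⟩
      have h3 : (S.card : ℝ) < (NB.card : ℝ) := by
        have : ((2 : ℝ) * S.card) ≤ (A.card : ℝ) := by exact_mod_cast hS
        nlinarith
    
      have h4 : S.card < NB.card := by exact_mod_cast h3
      have h5 := Finset.card_le_card (hsub2.trans h1)
      omega
    · push_neg at hS
      have hBsub : B ⊆ S.biUnion t := by
        intro w hw
        set SA := S.image (Subtype.val) with hSA
        have hSAsub : SA ⊆ A := by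
          intro v hv; simp only [hSA, Finset.mem_image] at hv
          obtain ⟨a', _, rfl⟩ := hv; exact a'.2
        have hSAcard : SA.card = S.card :=
          Finset.card_image_of_injective _ Subtype.val_injective
        obtain ⟨NA, hNAsub, hNAadj, hNAcard⟩ := hB w hw
        have hne : (NA ∩ SA).Nonempty := by
          rw [← Finset.card_pos]
          by_contra h
          push_neg at h
          interval_cases h' : (NA ∩ SA).card
          · have hdisj : Disjoint NA SA := by
              rwa [Finset.disjoint_iff_inter_eq_empty, ← Finset.card_eq_zero]
            have hcu : NA.card + SA.card ≤ A.card := by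
              rw [← Finset.card_union_of_disjoint hdisj]
              apply Finset.card_le_card
              exact Finset.union_subset hNAsub hSAsub
            have hcur : (NA.card : ℝ) + SA.card ≤ A.card := by exact_mod_cast hcu
            have hSr : ((A.card : ℝ)) < 2 * S.card := by exact_mod_cast hS
            rw [hSAcard] at hcur
            have hABr : (A.card : ℝ) = B.card := by exact_mod_cast hcard
            nlinarith
        obtain ⟨v, hv⟩ := hne
        rw [Finset.mem_inter] at hv
        obtain ⟨hv1, hv2⟩ := hv
        simp only [hSA, Finset.mem_image] at hv2
        obtain ⟨a', ha', rfl⟩ := hv2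
        refine Finset.mem_biUnion.2 ⟨a', ha', ?_⟩
        rw [ht]
        simp only [Finset.mem_filter]
        exact ⟨hw, (hNAadj _ hv1).symm⟩
      have h5 : B.card ≤ (S.biUnion t).card := Finset.card_le_card hBsub
      have h6 : S.card ≤ A.card := by
        have := Finset.card_le_univ S
        simpa [Fintype.card_coe] using this
      omega
  obtain ⟨f', hf'inj, hf'mem⟩ := (Finset.all_card_le_biUnion_card_iff_exists_injective t).mp hall
  refine ⟨fun v => if h : v ∈ A then f' ⟨v, h⟩ else v, ?_, ?_, ?_⟩
  · intro x hx y hy hxy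
    simp only [Finset.mem_coe] at hx hy
    simp only [dif_pos hx, dif_pos hy] at hxy
    exact congrArg Subtype.val (hf'inj hxy)
  · have hsub : Finset.image (fun v => if h : v ∈ A then f' ⟨v, h⟩ else v) A ⊆ B := by
      intro w hw
      rw [Finset.mem_image] at hw
      obtain ⟨v, hv, rfl⟩ := hw
      simp only [dif_pos hv]
      exact (Finset.mem_filter.1 (hf'mem ⟨v, hv⟩)).1
    apply Finset.eq_of_subset_of_card_le hsub
    rw [hcard.symm]
    rw [Finset.card_image_of_injOn]
    intro x hx y hy hxy
    simp only [Finset.mem_coe] at hx hy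
    simp only [dif_pos hx, dif_pos hy] at hxy
    exact congrArg Subtype.val (hf'inj hxy)
  · intro v hv
    simp only [dif_pos hv]
    exact (Finset.mem_filter.1 (hf'mem ⟨v, hv⟩)).2

lemma sum_exp_step {V : Type*} [DecidableEq V] (R0 T Aq : Finset V) (F : V → V) (lam : ℝ)
    (hinj : Set.InjOn F ↑R0) (himg : R0.image F = T) (hAq : Aq ⊆ T)
    (h2 : 2 ≤ T.card) (hlam0 : 0 ≤ lam) (hlam1 : lam ≤ (T.card : ℝ) - 1) :
    ∑ u ∈ R0, Real.exp (-(lam * (((Aq.erase (F u)).card : ℝ)) / ((T.card : ℝ) - 1)))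
      ≤ (T.card : ℝ) *
        Real.exp (-(lam * (Aq.card : ℝ) / (T.card : ℝ)) + (lam / ((T.card : ℝ) - 1)) ^ 2) := by
  set μ : ℕ := T.card with hμ
  have hre : ∑ u ∈ R0, Real.exp (-(lam * (((Aq.erase (F u)).card : ℝ)) / ((μ : ℝ) - 1)))
      = ∑ w ∈ T, Real.exp (-(lam * (((Aq.erase w).card : ℝ)) / ((μ : ℝ) - 1))) := by
    rw [← himg]
    rw [Finset.sum_image (fun x hx y hy h => hinj hx hy h)]
  rw [hre]
  set Xq : ℕ := Aq.card with hXq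
  have hXqμ : Xq ≤ μ := Finset.card_le_card hAq
  have hμpos : (0 : ℝ) < (μ : ℝ) := by
    have : 0 < μ := by omega
    exact_mod_cast this
  have hμ1pos : (0 : ℝ) < (μ : ℝ) - 1 := by
    have : (2 : ℝ) ≤ (μ : ℝ) := by exact_mod_cast h2
    linarith
  set a : ℝ := lam / ((μ : ℝ) - 1) with ha
  have ha0 : 0 ≤ a := div_nonneg hlam0 (le_of_lt hμ1pos)
  have ha1 : a ≤ 1 := by rw [ha, div_le_one hμ1pos]; exact hlam1
  set q : ℝ := (Xq : ℝ) / (μ : ℝ) with hq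
  have hq0 : 0 ≤ q := by positivity
  have hq1 : q ≤ 1 := by
    rw [hq, div_le_one hμpos]; exact_mod_cast hXqμ
  -- split the sum over T into Aq and T \ Aq
  have hsplit : ∑ w ∈ T, Real.exp (-(lam * (((Aq.erase w).card : ℝ)) / ((μ : ℝ) - 1)))
      = (Xq : ℝ) * Real.exp (-(a * ((Xq : ℝ) - 1)))
        + ((μ : ℝ) - Xq) * Real.exp (-(a * (Xq : ℝ))) := by
    rw [← Finset.sum_filter_add_sum_filter_not T (fun w => w ∈ Aq)]
    have hf1 : T.filter (fun w => w ∈ Aq) = Aq := by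
      rw [Finset.filter_mem_eq_inter, Finset.inter_eq_right.2 hAq]
    have hc2 : (T.filter (fun w => ¬ w ∈ Aq)).card = μ - Xq := by
      have := Finset.card_filter_add_card_filter_not (s := T) (p := fun w => w ∈ Aq)
      rw [hf1] at this; omega
    rw [hf1]
    have e1 : ∀ w ∈ Aq, Real.exp (-(lam * (((Aq.erase w).card : ℝ)) / ((μ : ℝ) - 1)))
        = Real.exp (-(a * ((Xq : ℝ) - 1))) := by
      intro w hw
      congr 1
      rw [Finset.card_erase_of_mem hw]
      have hX1 : 1 ≤ Xq := Finset.card_pos.2 ⟨w, hw⟩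
      have : ((Xq - 1 : ℕ) : ℝ) = (Xq : ℝ) - 1 := by
        rw [Nat.cast_sub hX1]; norm_num
      rw [this, ha]; ring
    have e0 : ∀ w ∈ T.filter (fun w => ¬ w ∈ Aq),
        Real.exp (-(lam * (((Aq.erase w).card : ℝ)) / ((μ : ℝ) - 1)))
        = Real.exp (-(a * (Xq : ℝ))) := by
      intro w hw
      rw [Finset.mem_filter] at hw
      congr 1
      rw [Finset.erase_eq_of_notMem hw.2, ha]; ring
    rw [Finset.sum_congr rfl e1, Finset.sum_congr rfl e0, Finset.sum_const, Finset.sum_const,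
      hc2]
    have : ((μ - Xq : ℕ) : ℝ) = (μ : ℝ) - Xq := by
      rw [Nat.cast_sub hXqμ]
    simp [nsmul_eq_mul, this]
    rfl
  rw [hsplit]
  have key := avg_step_ineq ha0 ha1 hq0 hq1
  -- multiply by μ * exp (-(a * Xq))
  have hmul : (Xq : ℝ) * Real.exp (-(a * ((Xq : ℝ) - 1))) + ((μ : ℝ) - Xq) * Real.exp (-(a * Xq))
      = ((μ : ℝ) * Real.exp (-(a * Xq))) * (q * Real.exp a + (1 - q)) := by
    rw [hq]
    have h1 : Real.exp (-(a * ((Xq : ℝ) - 1))) = Real.exp (-(a * Xq)) * Real.exp a := by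
      rw [← Real.exp_add]; ring_nf
    rw [h1]
    field_simp
  rw [hmul]
  have hpos : (0 : ℝ) < (μ : ℝ) * Real.exp (-(a * Xq)) := by positivity
  calc ((μ : ℝ) * Real.exp (-(a * Xq))) * (q * Real.exp a + (1 - q))
      ≤ ((μ : ℝ) * Real.exp (-(a * Xq))) * Real.exp (a * q + a ^ 2) := by
        apply mul_le_mul_of_nonneg_left key (le_of_lt hpos)
    _ = (μ : ℝ) * Real.exp (-(lam * (Xq : ℝ) / (μ : ℝ)) + a ^ 2) := by
        rw [mul_assoc, ← Real.exp_add]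
        congr 2
        rw [ha, hq]
        field_simp
        ring


open Classical in
noncomputable def nbrF {n : ℕ} (G : Fin n → SimpleGraph (Fin n)) (c v : Fin n)
    (T : Finset (Fin n)) : Finset (Fin n) :=
  T.filter (fun w => (G c).Adj v w)

lemma mem_nbrF {n : ℕ} {G : Fin n → SimpleGraph (Fin n)} {c v w : Fin n} {T : Finset (Fin n)} :
    w ∈ nbrF G c v T ↔ w ∈ T ∧ (G c).Adj v w := by
  simp [nbrF]

lemma nbrF_subset {n : ℕ} {G : Fin n → SimpleGraph (Fin n)} {c v : Fin n} {T : Finset (Fin n)} :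
    nbrF G c v T ⊆ T := fun x hx => (mem_nbrF.1 hx).1

lemma nbrF_erase {n : ℕ} {G : Fin n → SimpleGraph (Fin n)} {c v w : Fin n} {T : Finset (Fin n)} :
    nbrF G c v (T.erase w) = (nbrF G c v T).erase w := by
  ext x
  simp only [mem_nbrF, Finset.mem_erase]
  tauto

noncomputable def PhiF {n K : ℕ} (G : Fin n → SimpleGraph (Fin n))
    (Idx : Finset (Fin n × Fin n × Fin K × Fin K)) (lam denom : ℝ)
    (R : Fin K → Finset (Fin n)) : ℝ :=
  ∑ q ∈ Idx, Real.exp (-(lam * ((nbrF G q.2.1 q.1 (R q.2.2.2)).card : ℝ) / denom))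

set_option maxHeartbeats 1000000 in
lemma build_paths {n K : ℕ} (α : ℝ) (G : Fin n → SimpleGraph (Fin n))
    (W' : Fin K → Finset (Fin n)) (m s g : ℕ) (χ : Fin s → ℕ → Fin n)
    (hα : 0 < α) (hα1 : α ≤ 1) (hK0 : 0 < K) (hn0 : 0 < n)
    (hW'card : ∀ j, (W' j).card = m)
    (hsm : s < m) (hgdef : g = m - s)
    (hdeg : ∀ (c v : Fin n) (j ℓ : Fin K), (j.val + 1 = ℓ.val ∨ ℓ.val + 1 = j.val) →
        v ∈ W' j → (1/2 + 3*α/4) * m ≤ ((nbrF G c v (W' ℓ)).card : ℝ))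
    (hN : (n : ℝ)^2 * (K : ℝ)^2 ≤ ((3/8) * α * (α * (g:ℝ)^2 / (8*(m:ℝ))) / 4)^4) :
    ∃ p : Fin s → Fin K → Fin n,
      (∀ i j, p i j ∈ W' j) ∧
      (∀ j : Fin K, Function.Injective (fun i => p i j)) ∧
      (∀ (i : Fin s) (j : ℕ) (hj : j + 1 < K),
        (G (χ i (j+1))).Adj (p i ⟨j, by omega⟩) (p i ⟨j+1, hj⟩)) := by
  classical
  set lam : ℝ := α * (g:ℝ)^2 / (8*(m:ℝ)) with hlam_def
  set Idx : Finset (Fin n × Fin n × Fin K × Fin K) :=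
    Finset.univ.filter (fun q => q.1 ∈ W' q.2.2.1 ∧
      (q.2.2.1.val + 1 = q.2.2.2.val ∨ q.2.2.2.val + 1 = q.2.2.1.val)) with hIdx_def
  have hg1 : 1 ≤ g := by omega
  have hm1 : 1 ≤ m := by omega
  have hgm : g ≤ m := by omega
  have hgR : (1:ℝ) ≤ (g:ℝ) := by exact_mod_cast hg1
  have hmR : (1:ℝ) ≤ (m:ℝ) := by exact_mod_cast hm1
  have hgmR : (g:ℝ) ≤ (m:ℝ) := by exact_mod_cast hgm
  have hlam_pos : 0 < lam := by
    rw [hlam_def]; positivity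
  have hlam_g : lam ≤ (g:ℝ) := by
    rw [hlam_def, div_le_iff₀ (by linarith)]
    nlinarith
  have hNcard : ((Idx.card : ℝ)) ≤ (n : ℝ)^2 * (K : ℝ)^2 := by
    have h1 : Idx.card ≤ n * n * (K * K) := by
      calc Idx.card ≤ (Finset.univ : Finset (Fin n × Fin n × Fin K × Fin K)).card :=
            Finset.card_le_card (Finset.filter_subset _ _)
        _ = n * (n * (K * K)) := by simp [Fintype.card_prod]
        _ = n * n * (K * K) := by ring
    calc ((Idx.card : ℝ)) ≤ ((n * n * (K * K) : ℕ) : ℝ) := by exact_mod_cast h1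
      _ = (n : ℝ)^2 * (K : ℝ)^2 := by push_cast; ring
  -- extraction of the pointwise degree bound from the potential bound
  have hextr : ∀ t : ℕ, t < s → ∀ R : Fin K → Finset (Fin n),
      PhiF G Idx lam ((m:ℝ) - t) R ≤ PhiF G Idx lam m W' * Real.exp (lam^2 * t / (g:ℝ)^2) →
      ∀ q ∈ Idx, (1/2 + α/4) * ((m:ℝ) - t) ≤ ((nbrF G q.2.1 q.1 (R q.2.2.2)).card : ℝ) := by
    intro t htlt R hR q hq
    by_contra hcon
    push_neg at hcon
    have htm : t < m := by omega
    have hμr : (0:ℝ) < (m:ℝ) - t := by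
      have : (t:ℝ) < (m:ℝ) := by exact_mod_cast htm
      linarith
    set X : ℝ := ((nbrF G q.2.1 q.1 (R q.2.2.2)).card : ℝ) with hX
    have hterm : Real.exp (-(lam * X / ((m:ℝ) - t))) ≤ PhiF G Idx lam ((m:ℝ)-t) R := by
      apply Finset.single_le_sum (f := fun q' =>
        Real.exp (-(lam * ((nbrF G q'.2.1 q'.1 (R q'.2.2.2)).card : ℝ) / ((m:ℝ)-t))))
        (fun q' _ => Real.exp_nonneg _) hq
    have hstep1 : Real.exp (-(lam * (1/2 + α/4))) < Real.exp (-(lam * X / ((m:ℝ)-t))) := by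
      apply Real.exp_lt_exp.2
      have h1 : lam * X < lam * ((1/2+α/4) * ((m:ℝ)-t)) :=
        mul_lt_mul_of_pos_left hcon hlam_pos
      have h2 : lam * X / ((m:ℝ)-t) < lam * (1/2+α/4) := by
        rw [div_lt_iff₀ hμr]
        calc lam * X < lam * ((1/2+α/4) * ((m:ℝ)-t)) := h1
          _ = lam * (1/2+α/4) * ((m:ℝ)-t) := by ring
      linarith
    have hinit : PhiF G Idx lam m W' ≤ (Idx.card : ℝ) * Real.exp (-(lam * (1/2 + 3*α/4))) := by
      have hbd : ∀ q' ∈ Idx,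
          Real.exp (-(lam * ((nbrF G q'.2.1 q'.1 (W' q'.2.2.2)).card : ℝ) / (m:ℝ)))
            ≤ Real.exp (-(lam * (1/2 + 3*α/4))) := by
        intro q' hq'
        apply Real.exp_le_exp.2
        have hval : q'.1 ∈ W' q'.2.2.1 ∧
            (q'.2.2.1.val + 1 = q'.2.2.2.val ∨ q'.2.2.2.val + 1 = q'.2.2.1.val) := by
          rw [hIdx_def] at hq'
          simpa using (Finset.mem_filter.1 hq').2
        have hd := hdeg q'.2.1 q'.1 q'.2.2.1 q'.2.2.2 hval.2 hval.1
        have hmpos : (0:ℝ) < (m:ℝ) := by linarith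
        have : lam * (1/2 + 3*α/4) ≤ lam * ((nbrF G q'.2.1 q'.1 (W' q'.2.2.2)).card : ℝ) / (m:ℝ) := by
          rw [le_div_iff₀ hmpos]
          calc lam * (1/2 + 3*α/4) * (m:ℝ) = lam * ((1/2 + 3*α/4) * (m:ℝ)) := by ring
            _ ≤ lam * ((nbrF G q'.2.1 q'.1 (W' q'.2.2.2)).card : ℝ) :=
              mul_le_mul_of_nonneg_left hd (le_of_lt hlam_pos)
        linarith
      calc PhiF G Idx lam m W' ≤ Idx.card • Real.exp (-(lam * (1/2 + 3*α/4))) :=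
            Finset.sum_le_card_nsmul _ _ _ hbd
        _ = (Idx.card : ℝ) * Real.exp (-(lam * (1/2 + 3*α/4))) := by
            rw [nsmul_eq_mul]
    have hts : lam^2 * t / (g:ℝ)^2 ≤ lam^2 * s / (g:ℝ)^2 := by
      have h1 : (t:ℝ) ≤ (s:ℝ) := by exact_mod_cast le_of_lt htlt
      gcongr
    have hPhiW0 : 0 ≤ PhiF G Idx lam m W' :=
      Finset.sum_nonneg (fun q' _ => Real.exp_nonneg _)
    have hchain : Real.exp (-(lam * (1/2+α/4))) <
        (Idx.card : ℝ) * Real.exp (-(lam * (1/2+3*α/4)) + lam^2 * s / (g:ℝ)^2) := by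
      have c1 : Real.exp (-(lam * (1/2+α/4))) < PhiF G Idx lam m W' *
          Real.exp (lam^2 * t / (g:ℝ)^2) := lt_of_lt_of_le (lt_of_lt_of_le hstep1 hterm) hR
      have c2 : PhiF G Idx lam m W' * Real.exp (lam^2 * t / (g:ℝ)^2) ≤
          PhiF G Idx lam m W' * Real.exp (lam^2 * s / (g:ℝ)^2) :=
        mul_le_mul_of_nonneg_left (Real.exp_le_exp.2 hts) hPhiW0
      have c3 : PhiF G Idx lam m W' * Real.exp (lam^2 * s / (g:ℝ)^2) ≤
          ((Idx.card : ℝ) * Real.exp (-(lam * (1/2+3*α/4)))) * Real.exp (lam^2 * s / (g:ℝ)^2) :=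
        mul_le_mul_of_nonneg_right hinit (Real.exp_nonneg _)
      calc Real.exp (-(lam * (1/2+α/4))) < PhiF G Idx lam m W' *
            Real.exp (lam^2 * t / (g:ℝ)^2) := c1
        _ ≤ ((Idx.card : ℝ) * Real.exp (-(lam * (1/2+3*α/4)))) *
            Real.exp (lam^2 * s / (g:ℝ)^2) := le_trans c2 c3
        _ = (Idx.card : ℝ) * Real.exp (-(lam * (1/2+3*α/4)) + lam^2 * s / (g:ℝ)^2) := by
            rw [mul_assoc, ← Real.exp_add]
    set x : ℝ := (3/8) * α * lam with hx_def
    have hx0 : 0 ≤ x := by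
      rw [hx_def]; positivity
    have hexpx : Real.exp x < (Idx.card : ℝ) := by
      have hdiv : Real.exp (-(lam * (1/2+α/4)) - (-(lam * (1/2+3*α/4)) + lam^2 * s / (g:ℝ)^2))
          < (Idx.card : ℝ) := by
        rw [Real.exp_sub]
        rw [div_lt_iff₀ (Real.exp_pos _)]
        exact hchain
      have harg : x ≤ -(lam * (1/2+α/4)) - (-(lam * (1/2+3*α/4)) + lam^2 * s / (g:ℝ)^2) := by
        have hsm' : (s:ℝ) ≤ (m:ℝ) := by exact_mod_cast le_of_lt hsm
        have hgpos : (0:ℝ) < (g:ℝ) := by linarith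
        have hmpos : (0:ℝ) < (m:ℝ) := by linarith
        have hls : lam^2 * s / (g:ℝ)^2 ≤ (1/8) * α * lam := by
          have h1 : lam^2 * s / (g:ℝ)^2 = lam * (α * s / (8*(m:ℝ))) := by
            rw [hlam_def]
            field_simp
          rw [h1]
          have h2 : α * s / (8*(m:ℝ)) ≤ α/8 := by
            rw [div_le_div_iff₀ (by positivity) (by norm_num)]
            nlinarith
          calc lam * (α * s / (8*(m:ℝ))) ≤ lam * (α/8) :=
                mul_le_mul_of_nonneg_left h2 (le_of_lt hlam_pos)
            _ = (1/8) * α * lam := by ring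
        nlinarith
      calc Real.exp x ≤ Real.exp (-(lam * (1/2+α/4)) -
            (-(lam * (1/2+3*α/4)) + lam^2 * s / (g:ℝ)^2)) := Real.exp_le_exp.2 harg
        _ < (Idx.card : ℝ) := hdiv
    have hquart : (Idx.card : ℝ) ≤ Real.exp x := by
      calc (Idx.card : ℝ) ≤ (n : ℝ)^2 * (K : ℝ)^2 := hNcard
        _ ≤ (x/4)^4 := by rw [hx_def, hlam_def]; exact hN
        _ ≤ Real.exp x := quartic_le_exp hx0
    linarith
  -- main induction
  have main : ∀ t : ℕ, ∀ _hts : t ≤ s, ∃ (P : ℕ → Fin K → Fin n) (R : Fin K → Finset (Fin n)),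
      (∀ j, R j ⊆ W' j) ∧ (∀ j, (R j).card + t = m) ∧
      (∀ j, ∀ i, i < t → P i j ∈ W' j ∧ P i j ∉ R j) ∧
      (∀ j, ∀ i i', i < t → i' < t → i ≠ i' → P i j ≠ P i' j) ∧
      (∀ i, ∀ hi : i < t, ∀ jn : ℕ, ∀ hj : jn + 1 < K,
        (G (χ ⟨i, by omega⟩ (jn+1))).Adj (P i ⟨jn, by omega⟩) (P i ⟨jn+1, hj⟩)) ∧
      PhiF G Idx lam ((m:ℝ) - t) R ≤ PhiF G Idx lam m W' * Real.exp (lam^2 * t / (g:ℝ)^2) := by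
    intro t
    induction t with
    | zero =>
      intro _
      refine ⟨fun _ _ => ⟨0, hn0⟩, W', fun j => le_refl _, fun j => by simp [hW'card j],
        fun j i hi => absurd hi (by omega), fun j i i' hi => absurd hi (by omega),
        fun i hi => absurd hi (by omega), ?_⟩
      simp
    | succ t ih =>
      intro hts
      have hts' : t ≤ s := by omega
      have htlt : t < s := by omega
      obtain ⟨P, R, hRsub, hRcard, hPmem, hPinj, hPadj, hPhi⟩ := ih hts'
      have hkey := hextr t htlt R hPhi
      have hμ : ∀ j : Fin K, (R j).card = m - t := fun j => by have := hRcard j; omega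
      have hμ2 : 2 ≤ m - t := by omega
      have hcastμ : ((m - t : ℕ) : ℝ) = (m:ℝ) - t := by
        have h : t ≤ m := by omega
        exact Nat.cast_sub h
      -- perfect matchings between consecutive parts
      have hPM : ∀ jn : ℕ, ∃ f : Fin n → Fin n, ∀ hj : jn + 1 < K,
          Set.InjOn f ↑(R ⟨jn, by omega⟩) ∧
          (R ⟨jn, by omega⟩).image f = R ⟨jn+1, hj⟩ ∧
          ∀ v ∈ R ⟨jn, by omega⟩, (G (χ ⟨t, htlt⟩ (jn+1))).Adj v (f v) := by
        intro jn
        by_cases hj : jn + 1 < K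
        · have hjK : jn < K := by omega
          set c := χ ⟨t, htlt⟩ (jn+1) with hc_def
          have hcard12 : (R ⟨jn, hjK⟩).card = (R ⟨jn+1, hj⟩).card := by
            rw [hμ, hμ]
          have hA : ∀ v ∈ R ⟨jn, hjK⟩, ∃ NB : Finset (Fin n), NB ⊆ R ⟨jn+1, hj⟩ ∧
              (∀ w ∈ NB, (G c).Adj v w) ∧
              (((R ⟨jn, hjK⟩).card : ℝ)) < 2 * (NB.card : ℝ) := by
            intro v hv
            refine ⟨nbrF G c v (R ⟨jn+1, hj⟩), nbrF_subset, fun w hw => (mem_nbrF.1 hw).2, ?_⟩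
            have hq : (v, c, (⟨jn, hjK⟩ : Fin K), (⟨jn+1, hj⟩ : Fin K)) ∈ Idx := by
              rw [hIdx_def]
              simp only [Finset.mem_filter, Finset.mem_univ, true_and]
              exact ⟨hRsub _ hv, Or.inl trivial⟩
            have hkb := hkey _ hq
            have hcc : ((R ⟨jn, hjK⟩).card : ℝ) = (m:ℝ) - t := by
              rw [hμ]; exact hcastμ
            have hmt2 : (2:ℝ) ≤ (m:ℝ) - t := by
              have : ((2:ℕ) : ℝ) ≤ ((m - t : ℕ) : ℝ) := by exact_mod_cast hμ2
              rwa [hcastμ] at this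
            rw [hcc]
            nlinarith
          have hB : ∀ w ∈ R ⟨jn+1, hj⟩, ∃ NA : Finset (Fin n), NA ⊆ R ⟨jn, hjK⟩ ∧
              (∀ v ∈ NA, (G c).Adj w v) ∧
              (((R ⟨jn+1, hj⟩).card : ℝ)) < 2 * (NA.card : ℝ) := by
            intro w hw
            refine ⟨nbrF G c w (R ⟨jn, hjK⟩), nbrF_subset, fun v hv => (mem_nbrF.1 hv).2, ?_⟩
            have hq : (w, c, (⟨jn+1, hj⟩ : Fin K), (⟨jn, hjK⟩ : Fin K)) ∈ Idx := by
              rw [hIdx_def]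
              simp only [Finset.mem_filter, Finset.mem_univ, true_and]
              exact ⟨hRsub _ hw, Or.inr trivial⟩
            have hkb := hkey _ hq
            have hcc : ((R ⟨jn+1, hj⟩).card : ℝ) = (m:ℝ) - t := by
              rw [hμ]; exact hcastμ
            have hmt2 : (2:ℝ) ≤ (m:ℝ) - t := by
              have : ((2:ℕ) : ℝ) ≤ ((m - t : ℕ) : ℝ) := by exact_mod_cast hμ2
              rwa [hcastμ] at this
            rw [hcc]
            nlinarith
          obtain ⟨f, finj, fimg, fadj⟩ := dirac_pm (G c) (R ⟨jn, hjK⟩) (R ⟨jn+1, hj⟩)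
            hcard12 hA hB
          exact ⟨f, fun hj' => ⟨finj, fimg, fadj⟩⟩
        · exact ⟨id, fun hj' => absurd hj' hj⟩
      choose M hM using hPM
      set F : ℕ → Fin n → Fin n :=
        fun jn => Nat.rec id (fun k Fk => M k ∘ Fk) jn with hF_def
      have hF : ∀ jn : ℕ, ∀ hjn : jn < K, Set.InjOn (F jn) ↑(R ⟨0, hK0⟩) ∧
          (R ⟨0, hK0⟩).image (F jn) = R ⟨jn, hjn⟩ := by
        intro jn
        induction jn with
        | zero =>
          intro hjn
          refine ⟨Set.injOn_id _, ?_⟩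
          rw [show F 0 = id from rfl, Finset.image_id]
        | succ k ihk =>
          intro hjn
          have hk : k < K := by omega
          obtain ⟨ihinj, ihimg⟩ := ihk hk
          obtain ⟨minj, mimg, _⟩ := hM k hjn
          have hcomp : F (k+1) = M k ∘ F k := rfl
          constructor
          · rw [hcomp]
            apply Set.InjOn.comp minj ihinj
            intro x hx
            have hx' : F k x ∈ R ⟨k, hk⟩ := by
              rw [← ihimg]
              exact Finset.mem_image_of_mem _ hx
            exact hx'
          · rw [hcomp, ← Finset.image_image, ihimg, mimg]
      have hFadj : ∀ u ∈ R ⟨0, hK0⟩, ∀ jn : ℕ, ∀ hj : jn + 1 < K,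
          (G (χ ⟨t, htlt⟩ (jn+1))).Adj (F jn u) (F (jn+1) u) := by
        intro u hu jn hj
        obtain ⟨_, _, madj⟩ := hM jn hj
        have hk : jn < K := by omega
        have hmem : F jn u ∈ R ⟨jn, hk⟩ := by
          rw [← (hF jn hk).2]
          exact Finset.mem_image_of_mem _ hu
        exact madj _ hmem
      have hFmem : ∀ u ∈ R ⟨0, hK0⟩, ∀ j : Fin K, F j.val u ∈ R j := by
        intro u hu j
        have h := (hF j.val j.isLt).2
        have : F j.val u ∈ R ⟨j.val, j.isLt⟩ := by
          rw [← h]; exact Finset.mem_image_of_mem _ hu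
        simpa using this
      -- averaging choice
      have havg : ∃ u ∈ R ⟨0, hK0⟩,
          PhiF G Idx lam ((m:ℝ) - (t+1:ℕ)) (fun j => (R j).erase (F j.val u))
            ≤ PhiF G Idx lam ((m:ℝ) - t) R * Real.exp (lam^2 / (g:ℝ)^2) := by
        have hgcast : (g:ℝ) = (m:ℝ) - (s:ℝ) := by
          rw [hgdef]; exact_mod_cast Nat.cast_sub (le_of_lt hsm)
        have hR0card : (R ⟨0,hK0⟩).card = m - t := hμ _
        have hR0ne : (R ⟨0,hK0⟩).Nonempty := by
          rw [← Finset.card_pos, hR0card]; omega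
        have hR0cR : ((R ⟨0,hK0⟩).card : ℝ) = (m:ℝ) - t := by
          rw [hR0card]; exact hcastμ
        set E : ℝ := Real.exp (lam^2 / (g:ℝ)^2) with hE_def
        have hsum : ∑ u ∈ R ⟨0,hK0⟩,
            PhiF G Idx lam ((m:ℝ) - (t+1:ℕ)) (fun j => (R j).erase (F j.val u))
            ≤ ((R ⟨0,hK0⟩).card : ℝ) *
              (PhiF G Idx lam ((m:ℝ)-t) R * E) := by
          simp only [PhiF]
          rw [Finset.sum_comm]
          have per_q : ∀ q ∈ Idx,
              (∑ u ∈ R ⟨0,hK0⟩, Real.exp (-(lam *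
                ((nbrF G q.2.1 q.1 ((R q.2.2.2).erase (F q.2.2.2.val u))).card : ℝ)
                  / ((m:ℝ) - (t+1:ℕ)))))
              ≤ ((R ⟨0,hK0⟩).card : ℝ) *
                (Real.exp (-(lam * ((nbrF G q.2.1 q.1 (R q.2.2.2)).card : ℝ) / ((m:ℝ)-t))) * E) := by
            intro q hq
            have hTcard : ((R q.2.2.2).card : ℝ) = (m:ℝ) - t := by
              rw [hμ]; exact hcastμ
            have hdenom : (m:ℝ) - (t+1:ℕ) = ((R q.2.2.2).card : ℝ) - 1 := by
              rw [hTcard]; push_cast; ring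
            have h2T : 2 ≤ (R q.2.2.2).card := by rw [hμ]; exact hμ2
            have hlam1T : lam ≤ ((R q.2.2.2).card : ℝ) - 1 := by
              rw [hTcard]
              have hts1 : (t:ℝ) + 1 ≤ (s:ℝ) := by exact_mod_cast hts
              have : (g:ℝ) ≤ (m:ℝ) - t - 1 := by rw [hgcast]; linarith
              linarith
            have hinjF := (hF q.2.2.2.val q.2.2.2.isLt).1
            have himgF := (hF q.2.2.2.val q.2.2.2.isLt).2
            calc (∑ u ∈ R ⟨0,hK0⟩, Real.exp (-(lam *
                  ((nbrF G q.2.1 q.1 ((R q.2.2.2).erase (F q.2.2.2.val u))).card : ℝ)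
                    / ((m:ℝ) - (t+1:ℕ)))))
                = ∑ u ∈ R ⟨0,hK0⟩, Real.exp (-(lam *
                  ((((nbrF G q.2.1 q.1 (R q.2.2.2)).erase (F q.2.2.2.val u)).card : ℝ))
                    / (((R q.2.2.2).card : ℝ) - 1))) := by
                  apply Finset.sum_congr rfl
                  intro u _
                  rw [nbrF_erase, hdenom]
              _ ≤ ((R q.2.2.2).card : ℝ) *
                  Real.exp (-(lam * ((nbrF G q.2.1 q.1 (R q.2.2.2)).card : ℝ)
                    / ((R q.2.2.2).card : ℝ)) + (lam / (((R q.2.2.2).card : ℝ) - 1)) ^ 2) := by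
                  exact sum_exp_step (R ⟨0,hK0⟩) (R q.2.2.2) (nbrF G q.2.1 q.1 (R q.2.2.2))
                    (F q.2.2.2.val) lam hinjF himgF nbrF_subset h2T (le_of_lt hlam_pos) hlam1T
              _ ≤ ((R ⟨0,hK0⟩).card : ℝ) *
                  (Real.exp (-(lam * ((nbrF G q.2.1 q.1 (R q.2.2.2)).card : ℝ) / ((m:ℝ)-t))) * E) := by
                  rw [hR0cR, hTcard, hE_def, ← Real.exp_add]
                  apply mul_le_mul_of_nonneg_left ?_ (by linarith [hcastμ ▸ (by exact_mod_cast hμ2 : (2:ℝ) ≤ ((m-t:ℕ):ℝ))])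
                  apply Real.exp_le_exp.2
                  have hgpos : (0:ℝ) < (g:ℝ) := by linarith
                  have hts1 : (t:ℝ) + 1 ≤ (s:ℝ) := by exact_mod_cast hts
                  have hmt1 : (g:ℝ) ≤ ((m:ℝ) - t) - 1 := by rw [hgcast]; linarith
                  have hsq : (lam / (((m:ℝ) - t) - 1)) ^ 2 ≤ lam^2 / (g:ℝ)^2 := by
                    have hd1 : (0:ℝ) < ((m:ℝ) - t) - 1 := by linarith
                    have : lam / (((m:ℝ) - t) - 1) ≤ lam / (g:ℝ) := by
                      apply div_le_div_of_nonneg_left (le_of_lt hlam_pos) hgpos hmt1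
                    calc (lam / (((m:ℝ) - t) - 1)) ^ 2 ≤ (lam / (g:ℝ))^2 := by
                          apply sq_le_sq' ?_ this
                          have h0 : 0 ≤ lam / (((m:ℝ) - t) - 1) := by positivity
                          have h0' : 0 ≤ lam / (g:ℝ) := by positivity
                          linarith
                      _ = lam^2 / (g:ℝ)^2 := by rw [div_pow]
                  linarith
          calc (∑ q ∈ Idx, ∑ u ∈ R ⟨0,hK0⟩, Real.exp (-(lam *
                ((nbrF G q.2.1 q.1 ((R q.2.2.2).erase (F q.2.2.2.val u))).card : ℝ)
                  / ((m:ℝ) - (t+1:ℕ)))))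
              ≤ ∑ q ∈ Idx, ((R ⟨0,hK0⟩).card : ℝ) *
                (Real.exp (-(lam * ((nbrF G q.2.1 q.1 (R q.2.2.2)).card : ℝ) / ((m:ℝ)-t))) * E) :=
              Finset.sum_le_sum per_q
            _ = ((R ⟨0,hK0⟩).card : ℝ) *
                ((∑ q ∈ Idx, Real.exp (-(lam * ((nbrF G q.2.1 q.1 (R q.2.2.2)).card : ℝ)
                  / ((m:ℝ)-t)))) * E) := by
                rw [← Finset.mul_sum, ← Finset.sum_mul]
        by_contra hno
        push_neg at hno
        have hlt := Finset.sum_lt_sum_of_nonempty hR0ne (fun u hu => hno u hu)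
        rw [Finset.sum_const, nsmul_eq_mul] at hlt
        rw [hE_def] at hsum
        linarith
      obtain ⟨u, hu, hPhi'⟩ := havg
      refine ⟨fun i j => if i = t then F j.val u else P i j,
        fun j => (R j).erase (F j.val u), ?_, ?_, ?_, ?_, ?_, ?_⟩
      · intro j
        exact (Finset.erase_subset _ _).trans (hRsub j)
      · intro j
        rw [Finset.card_erase_of_mem (hFmem u hu j)]
        have := hRcard j
        omega
      · intro j i hi
        by_cases hit : i = t
        · subst hit
          simp only [if_pos rfl]
          exact ⟨hRsub j (hFmem u hu j), Finset.notMem_erase _ _⟩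
        · have hi' : i < t := by omega
          simp only [if_neg hit]
          refine ⟨(hPmem j i hi').1, fun hc => (hPmem j i hi').2 ?_⟩
          exact Finset.erase_subset _ _ hc
      · intro j i i' hi hi' hne
        by_cases hit : i = t <;> by_cases hit' : i' = t
        · omega
        · subst hit
          simp only [if_pos rfl, if_neg hit']
          intro hc
          exact (hPmem j i' (by omega)).2 (hc ▸ hFmem u hu j)
        · subst hit'
          simp only [if_pos rfl, if_neg hit]
          intro hc
          exact (hPmem j i (by omega)).2 (hc.symm ▸ hFmem u hu j)
        · simp only [if_neg hit, if_neg hit']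
          exact hPinj j i i' (by omega) (by omega) hne
      · intro i hi jn hj
        by_cases hit : i = t
        · subst hit
          simp only [if_pos rfl]
          exact hFadj u hu jn hj
        · have hi' : i < t := by omega
          simp only [if_neg hit]
          exact hPadj i hi' jn hj
      · calc PhiF G Idx lam ((m:ℝ) - (t+1:ℕ)) (fun j => (R j).erase (F j.val u))
            ≤ PhiF G Idx lam ((m:ℝ) - t) R * Real.exp (lam^2 / (g:ℝ)^2) := hPhi'
          _ ≤ (PhiF G Idx lam m W' * Real.exp (lam^2 * t / (g:ℝ)^2)) *
              Real.exp (lam^2 / (g:ℝ)^2) := by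
            apply mul_le_mul_of_nonneg_right hPhi (Real.exp_nonneg _)
          _ = PhiF G Idx lam m W' * Real.exp (lam^2 * ((t:ℕ)+1 : ℕ) / (g:ℝ)^2) := by
            rw [mul_assoc, ← Real.exp_add]
            congr 2
            push_cast
            field_simp
  -- conclude
  obtain ⟨P, R, hRsub, hRcard, hPmem, hPinj, hPadj, _⟩ := main s (le_refl s)
  refine ⟨fun i j => P i.val j, ?_, ?_, ?_⟩
  · intro i j
    exact (hPmem j i.val i.isLt).1
  · intro j i i' h
    apply Fin.ext
    by_contra hne
    exact hPinj j i.val i'.val i.isLt i'.isLt (fun hc => hne (by omega)) h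
  · intro i jn hj
    exact hPadj i.val i.isLt jn hj

set_option maxHeartbeats 1000000 in
/-- Lemma 3.2 (path collection): with `0 < 1/n ≪ ε, 1/K ≪ α ≤ 1`, given `n` graphs on
`{1,…,n}`, all `K`-partite with respect to a common balanced partition `V₁,…,V_K`,
such that all degrees between consecutive parts are at least `(1/2+α)n/K`, and given
`s ≤ (1−ε)n/K` colour patterns `χ_i`, there are pairwise vertex-disjoint paths
`P₁,…,P_s`, each with one vertex in each part `V₁,…,V_K` in order, such that the
`j`-th edge of `P_i` lies in the graph of colour `χ_i(j)`. -/
theorem stmt_12 (α : ℝ) (hα : 0 < α) (hα1 : α ≤ 1) :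
    ∃ δ : ℝ, 0 < δ ∧ ∀ (ε : ℝ) (K : ℕ), 0 < ε → ε ≤ δ → (1 : ℝ) / δ ≤ K →
    ∃ n₀ : ℕ, ∀ n : ℕ, n₀ ≤ n →
    ∀ (G : Fin n → SimpleGraph (Fin n)) (W : Fin K → Finset (Fin n)),
    -- V₁,…,V_K is a balanced partition of the vertex set
    (∀ j j' : Fin K, j ≠ j' → Disjoint (W j) (W j')) →
    (∀ v : Fin n, ∃ j : Fin K, v ∈ W j) →
    (∀ j j' : Fin K, (W j).card ≤ (W j').card + 1) →
    -- every graph is K-partite with respect to the partition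
    (∀ (i : Fin n) (u v : Fin n) (j : Fin K), (G i).Adj u v → u ∈ W j → v ∉ W j) →
    -- degree condition between consecutive parts
    (∀ (i : Fin n) (j : ℕ) (hj : j + 1 < K),
      (∀ v ∈ W ⟨j, by omega⟩,
        (1/2 + α) * n / K ≤ (((G i).neighborSet v) ∩ ↑(W ⟨j+1, hj⟩)).ncard) ∧
      (∀ v ∈ W ⟨j+1, hj⟩,
        (1/2 + α) * n / K ≤ (((G i).neighborSet v) ∩ ↑(W ⟨j, by omega⟩)).ncard)) →
    ∀ (s : ℕ) (χ : Fin s → ℕ → Fin n), (s : ℝ) ≤ (1 - ε) * n / K →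
    ∃ p : Fin s → Fin K → Fin n,
      Function.Injective (fun q : Fin s × Fin K => p q.1 q.2) ∧
      (∀ (i : Fin s) (j : Fin K), p i j ∈ W j) ∧
      (∀ (i : Fin s) (j : ℕ) (hj : j + 1 < K),
        (G (χ i (j+1))).Adj (p i ⟨j, by omega⟩) (p i ⟨j+1, hj⟩)) := by
  classical
  refine ⟨1, one_pos, ?_⟩
  intro ε K hε hε1 hK1
  have hK0 : 0 < K := by
    by_contra h
    push_neg at h
    interval_cases K
    · simp at hK1
      linarith
  have hKR : (1:ℝ) ≤ (K:ℝ) := by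
    have : ((1:ℕ):ℝ) ≤ (K:ℝ) := by exact_mod_cast hK0
    simpa using this
  set c : ℝ := 3*α^2*ε^2/(1024*(K:ℝ)) with hc_def
  have hc0 : 0 < c := by rw [hc_def]; positivity
  refine ⟨max 1 ⌈(2*(K:ℝ)/ε) + (4*(K:ℝ)/α) + (K:ℝ)/c^2⌉₊ + 1, ?_⟩
  intro n hn G W hdisj hcover hbal hpart hdeg s χ hs
  have hn1 : 0 < n := by omega
  have hnC : (2*(K:ℝ)/ε) + (4*(K:ℝ)/α) + (K:ℝ)/c^2 ≤ (n:ℝ) := by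
    have h1 : (⌈(2*(K:ℝ)/ε) + (4*(K:ℝ)/α) + (K:ℝ)/c^2⌉₊ : ℝ) ≤ (n:ℝ) := by
      have : ⌈(2*(K:ℝ)/ε) + (4*(K:ℝ)/α) + (K:ℝ)/c^2⌉₊ ≤ n := by omega
      exact_mod_cast this
    exact le_trans (Nat.le_ceil _) h1
  have ht1 : (0:ℝ) ≤ 2*(K:ℝ)/ε := by positivity
  have ht2 : (0:ℝ) ≤ 4*(K:ℝ)/α := by positivity
  have ht3 : (0:ℝ) ≤ (K:ℝ)/c^2 := by positivity
  have hnA : 2*(K:ℝ)/ε ≤ (n:ℝ) := by linarith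
  have hnB : 4*(K:ℝ)/α ≤ (n:ℝ) := by linarith
  have hnD : (K:ℝ)/c^2 ≤ (n:ℝ) := by linarith
  haveI : Nonempty (Fin K) := ⟨⟨0, hK0⟩⟩
  -- minimum part size
  obtain ⟨j₀, _, hj₀⟩ := Finset.exists_mem_eq_inf' (Finset.univ_nonempty (α := Fin K))
    (fun j => (W j).card)
  set m : ℕ := Finset.univ.inf' Finset.univ_nonempty (fun j => (W j).card) with hm_def
  have hm_le : ∀ j, m ≤ (W j).card := fun j => Finset.inf'_le _ (Finset.mem_univ j)
  have hm_ub : ∀ j, (W j).card ≤ m + 1 := by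
    intro j
    rw [hj₀]
    exact hbal j j₀
  -- sum of part sizes is n
  have hcover' : Finset.univ.biUnion W = (Finset.univ : Finset (Fin n)) := by
    apply Finset.eq_univ_of_forall
    intro v
    rw [Finset.mem_biUnion]
    obtain ⟨j, hj⟩ := hcover v
    exact ⟨j, Finset.mem_univ j, hj⟩
  have hsum : ∑ j, (W j).card = n := by
    rw [← Finset.card_biUnion (fun x _ y _ hxy => hdisj x y hxy), hcover',
      Finset.card_univ, Fintype.card_fin]
  have hKm : K * m ≤ n := by
    calc K * m = ∑ _j : Fin K, m := by
          rw [Finset.sum_const, Finset.card_univ, Fintype.card_fin, smul_eq_mul]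
      _ ≤ ∑ j, (W j).card := Finset.sum_le_sum (fun j _ => hm_le j)
      _ = n := hsum
  have hKm1 : n ≤ K * (m+1) := by
    calc n = ∑ j, (W j).card := hsum.symm
      _ ≤ ∑ _j : Fin K, (m+1) := Finset.sum_le_sum (fun j _ => hm_ub j)
      _ = K * (m+1) := by
          rw [Finset.sum_const, Finset.card_univ, Fintype.card_fin, smul_eq_mul]
  have hKRpos : (0:ℝ) < (K:ℝ) := by linarith
  have hmKr : (m:ℝ) ≤ (n:ℝ)/(K:ℝ) := by
    rw [le_div_iff₀ hKRpos]
    have : ((K * m : ℕ) : ℝ) ≤ (n:ℝ) := by exact_mod_cast hKm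
    push_cast at this
    linarith
  have hmlb : (n:ℝ)/(K:ℝ) - 1 ≤ (m:ℝ) := by
    have h : ((n:ℕ) : ℝ) ≤ ((K * (m+1) : ℕ) : ℝ) := by exact_mod_cast hKm1
    push_cast at h
    rw [sub_le_iff_le_add, div_le_iff₀ hKRpos]
    nlinarith
  have hεnK : (2:ℝ) ≤ ε * n / K := by
    rw [le_div_iff₀ hKRpos]
    rw [div_le_iff₀ hε] at hnA
    nlinarith
  -- s < m
  have hsmR : (s:ℝ) + 1 ≤ (m:ℝ) := by
    have h1 : (s:ℝ) ≤ (1-ε)*n/K := hs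
    have h2 : (1-ε)*(n:ℝ)/K = (n:ℝ)/K - ε*n/K := by ring
    nlinarith
  have hsm : s < m := by exact_mod_cast (by linarith : (s:ℝ) < (m:ℝ))
  set g : ℕ := m - s with hg_def
  have hgcast : (g:ℝ) = (m:ℝ) - s := by
    rw [hg_def]; exact_mod_cast Nat.cast_sub (le_of_lt hsm)
  have hglb : ε * n / (2*K) ≤ (g:ℝ) := by
    have h1 : (g:ℝ) ≥ ε*n/K - 1 := by
      rw [hgcast]
      have : (s:ℝ) ≤ (n:ℝ)/K - ε*n/K := by
        have h2 : (1-ε)*(n:ℝ)/K = (n:ℝ)/K - ε*n/K := by ring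
        linarith [hs]
      linarith
    have h2 : ε*n/(2*K) ≤ ε*n/K - 1 := by
      have h3 : ε*n/K = 2 * (ε*n/(2*K)) := by field_simp
      linarith
    linarith
  -- trim the parts
  have hch := fun j => Finset.exists_subset_card_eq (hm_le j)
  choose W' hW'sub hW'card using hch
  -- degree conversion
  have hconv : ∀ (ci v : Fin n) (T : Finset (Fin n)),
      (((G ci).neighborSet v) ∩ ↑T).ncard = (nbrF G ci v T).card := by
    intro ci v T
    have hset : ((G ci).neighborSet v) ∩ ↑T = ↑(nbrF G ci v T) := by
      ext w
      simp only [Set.mem_inter_iff, SimpleGraph.mem_neighborSet, Finset.mem_coe, mem_nbrF]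
      tauto
    rw [hset, Set.ncard_coe_finset]
  have hdeg' : ∀ (ci v : Fin n) (j ℓ : Fin K), (j.val + 1 = ℓ.val ∨ ℓ.val + 1 = j.val) →
      v ∈ W' j → (1/2 + 3*α/4) * m ≤ ((nbrF G ci v (W' ℓ)).card : ℝ) := by
    intro ci v j ℓ hdir hv
    have hvW : v ∈ W j := hW'sub j hv
    -- big-neighborhood bound in W ℓ
    have hbig : (1/2 + α) * n / K ≤ ((nbrF G ci v (W ℓ)).card : ℝ) := by
      rcases hdir with hdir | hdir
      · have hj1K : j.val + 1 < K := by rw [hdir]; exact ℓ.isLt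
        have hℓeq : (⟨j.val + 1, hj1K⟩ : Fin K) = ℓ := Fin.ext hdir
        have hres := (hdeg ci j.val hj1K).1 v hvW
        rw [hℓeq, hconv] at hres
        exact hres
      · have hj1K : ℓ.val + 1 < K := by rw [hdir]; exact j.isLt
        have hjeq : (⟨ℓ.val + 1, hj1K⟩ : Fin K) = j := Fin.ext hdir
        have hres := (hdeg ci ℓ.val hj1K).2 v (by rw [hjeq]; exact hvW)
        rw [hconv] at hres
        exact hres
    -- trimming loses at most one vertex
    have htrim : ((nbrF G ci v (W ℓ)).card : ℝ) ≤ ((nbrF G ci v (W' ℓ)).card : ℝ) + 1 := by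
      have hsub : nbrF G ci v (W ℓ) ⊆ nbrF G ci v (W' ℓ) ∪ (W ℓ \ W' ℓ) := by
        intro w hw
        rw [mem_nbrF] at hw
        by_cases hw' : w ∈ W' ℓ
        · exact Finset.mem_union_left _ (mem_nbrF.2 ⟨hw', hw.2⟩)
        · exact Finset.mem_union_right _ (Finset.mem_sdiff.2 ⟨hw.1, hw'⟩)
      have hcard1 : (nbrF G ci v (W ℓ)).card ≤
          (nbrF G ci v (W' ℓ)).card + (W ℓ \ W' ℓ).card :=
        le_trans (Finset.card_le_card hsub) (Finset.card_union_le _ _)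
      have hsd : (W ℓ \ W' ℓ).card ≤ 1 := by
        rw [Finset.card_sdiff_of_subset (hW'sub ℓ), hW'card ℓ]
        have := hm_ub ℓ
        omega
      have : (nbrF G ci v (W ℓ)).card ≤ (nbrF G ci v (W' ℓ)).card + 1 := by omega
      exact_mod_cast this
    -- arithmetic: (1/2+3α/4)m ≤ (1/2+α)n/K - 1
    have hαn : (4:ℝ) ≤ α * n / K := by
      rw [le_div_iff₀ hKRpos]
      rw [div_le_iff₀ hα] at hnB
      nlinarith
    have harith : (1/2 + 3*α/4) * (m:ℝ) ≤ (1/2 + α) * n / K - 1 := by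
      have h1 : (1/2 + 3*α/4) * (m:ℝ) ≤ (1/2 + 3*α/4) * ((n:ℝ)/K) := by
        apply mul_le_mul_of_nonneg_left hmKr
        linarith
      have h2 : (1/2 + 3*α/4) * ((n:ℝ)/K) + (α/4) * ((n:ℝ)/K) = (1/2 + α) * n / K := by
        ring
      have h3 : (1:ℝ) ≤ (α/4) * ((n:ℝ)/K) := by
        have heq : (α/4) * ((n:ℝ)/K) = (α * n / K)/4 := by ring
        rw [heq]
        linarith [hαn]
      nlinarith
    linarith
  -- the quantitative hypothesis hN
  have hmpos : (0:ℝ) < (m:ℝ) := by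
    have : (0:ℕ) < m := by omega
    exact_mod_cast this
  have hgpos : (0:ℝ) < (g:ℝ) := by
    have : (0:ℕ) < g := by omega
    exact_mod_cast this
  have hnpos : (0:ℝ) < (n:ℝ) := by exact_mod_cast hn1
  have hx_lb : c * n ≤ (3/8) * α * (α * (g:ℝ)^2 / (8*(m:ℝ))) / 4 := by
    have h1 : ε*n/(2*K) ≥ 0 := by positivity
    have hg2 : (ε*n/(2*K))^2 ≤ (g:ℝ)^2 := by
      apply sq_le_sq' ?_ hglb
      linarith
    have hKmR : (K:ℝ) * m ≤ (n:ℝ) := by exact_mod_cast hKm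
    have hminv : 1/(m:ℝ) ≥ (K:ℝ)/(n:ℝ) := by
      rw [ge_iff_le, div_le_div_iff₀ hnpos hmpos]
      nlinarith [hKmR]
    have expand : (3/8) * α * (α * (g:ℝ)^2 / (8*(m:ℝ))) / 4
        = (3/256) * α^2 * (g:ℝ)^2 * (1/(m:ℝ)) := by
      field_simp
      ring
    rw [expand, hc_def]
    have hstep : (3/256) * α^2 * (g:ℝ)^2 * (1/(m:ℝ))
        ≥ (3/256) * α^2 * ((ε*n/(2*K))^2) * ((K:ℝ)/(n:ℝ)) := by
      apply mul_le_mul ?_ hminv (by positivity) (by positivity)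
      apply mul_le_mul_of_nonneg_left hg2 (by positivity)
    have heq : (3/256) * α^2 * ((ε*n/(2*K))^2) * ((K:ℝ)/(n:ℝ))
        = (3*α^2*ε^2/(1024*(K:ℝ))) * n := by
      field_simp
      ring
    linarith [heq ▸ hstep]
  have hN : (n : ℝ)^2 * (K : ℝ)^2 ≤ ((3/8) * α * (α * (g:ℝ)^2 / (8*(m:ℝ))) / 4)^4 := by
    have hcn : (K:ℝ) ≤ c^2 * n := by
      rw [div_le_iff₀ (by positivity)] at hnD
      linarith [hnD]
    have hcn0 : (0:ℝ) ≤ c * n := by positivity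
    have hp4 : (c*n)^4 ≤ ((3/8) * α * (α * (g:ℝ)^2 / (8*(m:ℝ))) / 4)^4 :=
      pow_le_pow_left₀ hcn0 hx_lb 4
    have hlow : (n:ℝ)^2 * (K:ℝ)^2 ≤ (c*n)^4 := by
      have h2 : (K:ℝ)^2 ≤ (c^2*n)^2 := by
        apply sq_le_sq' ?_ hcn
        nlinarith [hcn, hKRpos]
      calc (n:ℝ)^2 * (K:ℝ)^2 ≤ (n:ℝ)^2 * (c^2*n)^2 := by
            apply mul_le_mul_of_nonneg_left h2 (by positivity)
        _ = (c*n)^4 := by ring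
    linarith
  -- apply the main construction
  obtain ⟨p, hpmem, hpinj, hpadj⟩ := build_paths α G W' m s g χ hα hα1 hK0 hn1
    hW'card hsm hg_def hdeg' hN
  refine ⟨p, ?_, ?_, ?_⟩
  · rintro ⟨i, j⟩ ⟨i', j'⟩ h
    simp only at h
    by_cases hjj : j = j'
    · subst hjj
      have := hpinj j h
      simp only [this]
    · exfalso
      have h1 : p i j ∈ W j := hW'sub j (hpmem i j)
      have h2 : p i' j' ∈ W j' := hW'sub j' (hpmem i' j')
      rw [h] at h1
      exact (Finset.disjoint_left.1 (hdisj j j' hjj)) h1 h2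
  · intro i j
    exact hW'sub j (hpmem i j)
  · exact hpadj
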